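/- Define x(t) = x₁t + t³u(t), y(t) = t²v(t) with u, v real analytic on [0,ε), and A₁(t) = t/2 + a₃t³ + O(t⁵), B₁(t) = b₀ + O(t⁴), b₀ > 0. If (x,y) solves x' = F(t)x + y² − x², y' = G(t)y on (0,ε) with F(t) = −A₁'/A₁ + 1/A₁ − A₁/B₁² and G(t) = −B₁'/B₁ − 2/A₁ + 2x, then u(0) = −x₁²/2 − x₁(4a₃ + 1/(4b₀²)) and v(0) = 0. -/

import Mathlib

open Real Filter Topology Asymptotics

set_option maxHeartbeats 1000000

/-- Singular initial conditions on the trivial bundle `P₁`: if `x t = x₁·t + t³·u t`,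
`y t = t²·v t` (with `u, v` real analytic on `[0, ε)`) solve the `SU(2)³`-invariant
instanton system, then `u 0 = −x₁²/2 − x₁(4a₃ + 1/(4b₀²))` and `v 0 = 0`. -/
theorem stmt16 (A₁ B₁ u v : ℝ → ℝ) (a₃ b₀ x₁ ε : ℝ) (hb₀ : 0 < b₀) (hε : 0 < ε)
    (hA : ContDiff ℝ ⊤ A₁) (hB : ContDiff ℝ ⊤ B₁)
    (hAasym : (fun t => A₁ t - (t/2 + a₃ * t^3)) =O[𝓝[>] (0:ℝ)] fun t => t^5)
    (hBasym : (fun t => B₁ t - b₀) =O[𝓝[>] (0:ℝ)] fun t => t^4)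
    (hu : AnalyticOn ℝ u (Set.Ico 0 ε)) (hv : AnalyticOn ℝ v (Set.Ico 0 ε))
    (hx : ∀ t ∈ Set.Ioo 0 ε, HasDerivAt (fun s => x₁ * s + s^3 * u s)
      ((-deriv A₁ t / A₁ t + 1 / A₁ t - A₁ t / (B₁ t)^2) * (x₁ * t + t^3 * u t)
        + (t^2 * v t)^2 - (x₁ * t + t^3 * u t)^2) t)
    (hy : ∀ t ∈ Set.Ioo 0 ε, HasDerivAt (fun s => s^2 * v s)
      ((-deriv B₁ t / B₁ t - 2 / A₁ t + 2 * (x₁ * t + t^3 * u t)) * (t^2 * v t)) t) :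
    u 0 = -x₁^2/2 - x₁ * (4*a₃ + 1/(4*b₀^2)) ∧ v 0 = 0 := by
  set L := 𝓝[>] (0:ℝ) with hLdef
  have htt : Tendsto (fun t : ℝ => t) L (𝓝 0) := tendsto_id.mono_left nhdsWithin_le_nhds
  have hpos : ∀ᶠ t in L, 0 < t := eventually_mem_nhdsWithin
  have hne : ∀ᶠ t in L, t ≠ 0 := hpos.mono fun t ht => ne_of_gt ht
  have hIoo : ∀ᶠ t in L, t ∈ Set.Ioo 0 ε := by
    rw [hLdef, ← nhdsWithin_Ioo_eq_nhdsGT hε]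
    exact eventually_mem_nhdsWithin
  -- little-o consequences of hAasym
  have hlo : ∀ k : ℕ, k ≤ 4 →
      Tendsto (fun t => (A₁ t - (t/2 + a₃ * t^3))/t^k) L (𝓝 0) := by
    intro k hk
    refine IsLittleO.tendsto_div_nhds_zero (hAasym.trans_isLittleO ?_)
    have hgf : ∀ᶠ t in L, t^k = 0 → t^5 = 0 := by
      filter_upwards [hne] with t ht h
      exact absurd h (pow_ne_zero _ ht)
    rw [isLittleO_iff_tendsto' hgf]
    have h1 : Tendsto (fun t : ℝ => t^(5-k)) L (𝓝 (0^(5-k))) := htt.pow _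
    rw [zero_pow (by omega : 5 - k ≠ 0)] at h1
    refine h1.congr' ?_
    filter_upwards [hne] with t ht
    rw [pow_sub₀ t ht (by omega : k ≤ 5), div_eq_mul_inv]
  have hq1 := hlo 1 (by norm_num)
  have hq3 := hlo 3 (by norm_num)
  -- A₁ t / t → 1/2
  have hA1 : Tendsto (fun t => A₁ t / t) L (𝓝 (1/2)) := by
    have h2 : Tendsto (fun t : ℝ => (A₁ t - (t/2 + a₃ * t^3))/t^1 + (1/2 + a₃ * t^2)) L
        (𝓝 (0 + (1/2 + a₃ * 0^2))) :=
      hq1.add (tendsto_const_nhds.add ((htt.pow 2).const_mul a₃))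
    have h3 : (0 + (1/2 + a₃ * (0:ℝ)^2)) = 1/2 := by norm_num
    rw [h3] at h2
    refine h2.congr' ?_
    filter_upwards [hne] with t ht
    field_simp
    ring
  -- t / A₁ t → 2
  have htA : Tendsto (fun t => t / A₁ t) L (𝓝 2) := by
    have h2 : Tendsto (fun t => (A₁ t / t)⁻¹) L (𝓝 ((1/2:ℝ)⁻¹)) :=
      hA1.inv₀ (by norm_num)
    norm_num at h2
    exact h2
  -- A₁ positivity near 0⁺
  have hApos : ∀ᶠ t in L, 0 < A₁ t := by
    have h4 : ∀ᶠ t in L, (1/4:ℝ) < A₁ t / t := hA1.eventually (eventually_gt_nhds (by norm_num))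
    filter_upwards [h4, hpos] with t h4t hpt
    have := (lt_div_iff₀ hpt).1 h4t
    nlinarith
  have hAne : ∀ᶠ t in L, A₁ t ≠ 0 := hApos.mono fun t ht => ne_of_gt ht
  -- B₁ → b₀, B₁ ≠ 0
  have hB0 : Tendsto B₁ L (𝓝 b₀) := by
    have h1 : Tendsto (fun t => B₁ t - b₀) L (𝓝 0) := by
      refine hBasym.trans_tendsto ?_
      have := htt.pow 4
      rwa [zero_pow (by norm_num : (4:ℕ) ≠ 0)] at this
    have := h1.add (tendsto_const_nhds (x := b₀))
    rw [zero_add] at this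
    exact this.congr fun t => by ring
  have hBne : ∀ᶠ t in L, B₁ t ≠ 0 := by
    have h4 : ∀ᶠ t in L, b₀/2 < B₁ t := hB0.eventually (eventually_gt_nhds (by linarith))
    filter_upwards [h4] with t ht
    linarith
  -- continuity of u, v at 0 within
  have hLle : L ≤ 𝓝[Set.Ico 0 ε] (0:ℝ) := by
    rw [hLdef, ← nhdsWithin_Ioo_eq_nhdsGT hε]
    exact nhdsWithin_mono _ Set.Ioo_subset_Ico_self
  have hu0 : Tendsto u L (𝓝 (u 0)) :=
    ((hu 0 ⟨le_refl 0, hε⟩).continuousWithinAt).mono_left hLle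
  have hv0 : Tendsto v L (𝓝 (v 0)) :=
    ((hv 0 ⟨le_refl 0, hε⟩).continuousWithinAt).mono_left hLle
  -- x t → 0
  have hxlim : Tendsto (fun t => x₁ * t + t^3 * u t) L (𝓝 0) := by
    have h1 : Tendsto (fun t : ℝ => x₁ * t + t^3 * u t) L (𝓝 (x₁ * 0 + 0^3 * u 0)) :=
      ((htt.const_mul x₁).add ((htt.pow 3).mul hu0))
    norm_num at h1
    exact h1
  -- derivative of t^4
  have hg4 : ∀ t : ℝ, HasDerivAt (fun s => s^4) (4*t^3) t := fun t => by
    have := hasDerivAt_pow 4 t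
    norm_num at this
    exact this
  have hg'ne : ∀ᶠ t in L, (4:ℝ)*t^3 ≠ 0 := by
    filter_upwards [hpos] with t ht
    positivity
  have hg0 : Tendsto (fun t : ℝ => t^4) L (𝓝 0) := by
    have := htt.pow 4
    rwa [zero_pow (by norm_num : (4:ℕ) ≠ 0)] at this
  constructor
  · ------------------------------------------------------------------
    -- u part : F = A₁·x − x₁/2·t², L'Hôpital against t⁴
    ------------------------------------------------------------------
    set X : ℝ → ℝ := fun t => x₁ * t + t^3 * u t with hXdef
    set F : ℝ → ℝ := fun t => A₁ t * X t - x₁/2 * t^2 with hFdef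
    set F' : ℝ → ℝ := fun t => X t - (A₁ t)^2 * X t / (B₁ t)^2
      + A₁ t * ((t^2 * v t)^2 - (X t)^2) - x₁ * t with hF'def
    have hFd : ∀ᶠ t in L, HasDerivAt F (F' t) t := by
      filter_upwards [hIoo, hAne, hBne] with t htI hAt hBt
      have hAd : HasDerivAt A₁ (deriv A₁ t) t := (hA.differentiable (by simp) t).hasDerivAt
      have h1 := (hAd.mul (hx t htI)).sub ((hasDerivAt_pow 2 t).const_mul (x₁/2))
      refine h1.congr_deriv ?_
      simp only [hF'def, hXdef]
      field_simp
      ring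
    have hF0 : Tendsto F L (𝓝 0) := by
      have hA0 : Tendsto A₁ L (𝓝 0) := by
        have h1 := hA1.mul htt
        rw [mul_zero] at h1
        refine h1.congr' ?_
        filter_upwards [hne] with t ht
        field_simp
      have h2 : Tendsto (fun t => A₁ t * X t - x₁/2 * t^2) L (𝓝 (0*0 - x₁/2*0^2)) :=
        (hA0.mul hxlim).sub ((htt.pow 2).const_mul (x₁/2))
      norm_num at h2
      exact h2
    have hdivu : Tendsto (fun t => F' t / (4*t^3)) L
        (𝓝 ((u 0 - (1/2)^2 * (x₁ + 0^2 * u 0) / b₀^2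
          + (1/2) * (0^2 * (v 0)^2 - (x₁ + 0^2 * u 0)^2))/4)) := by
      have hE : Tendsto (fun t => (u t - (A₁ t / t)^2 * (x₁ + t^2 * u t) / (B₁ t)^2
          + (A₁ t / t) * (t^2 * (v t)^2 - (x₁ + t^2 * u t)^2))/4) L
          (𝓝 ((u 0 - (1/2)^2 * (x₁ + 0^2 * u 0) / b₀^2
          + (1/2) * (0^2 * (v 0)^2 - (x₁ + 0^2 * u 0)^2))/4)) := by
        have hxq : Tendsto (fun t : ℝ => x₁ + t^2 * u t) L (𝓝 (x₁ + 0^2 * u 0)) :=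
          tendsto_const_nhds.add ((htt.pow 2).mul hu0)
        have hsq : Tendsto (fun t : ℝ => t^2 * (v t)^2 - (x₁ + t^2 * u t)^2) L
            (𝓝 (0^2 * (v 0)^2 - (x₁ + 0^2 * u 0)^2)) :=
          ((htt.pow 2).mul (hv0.pow 2)).sub (hxq.pow 2)
        exact ((hu0.sub (((hA1.pow 2).mul hxq).div (hB0.pow 2)
          (by positivity))).add (hA1.mul hsq)).div_const 4
      refine hE.congr' ?_
      filter_upwards [hne, hBne] with t ht hBt
      simp only [hF'def, hXdef]
      field_simp
      ring
    have hFG := HasDerivAt.lhopital_zero_nhdsGT hFd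
      (Filter.Eventually.of_forall fun t => hg4 t) hg'ne hF0 hg0 hdivu
    have hFG2 : Tendsto (fun t => F t / t^4) L
        (𝓝 (0 * (x₁ + 0^2 * u 0) + u 0/2 + a₃*x₁ + a₃*(0^2*u 0))) := by
      have hE2 : Tendsto (fun t => ((A₁ t - (t/2 + a₃*t^3))/t^3) * (x₁ + t^2 * u t)
          + u t/2 + a₃*x₁ + a₃*(t^2*u t)) L
          (𝓝 (0 * (x₁ + 0^2 * u 0) + u 0/2 + a₃*x₁ + a₃*(0^2*u 0))) := by
        have hxq : Tendsto (fun t : ℝ => x₁ + t^2 * u t) L (𝓝 (x₁ + 0^2 * u 0)) :=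
          tendsto_const_nhds.add ((htt.pow 2).mul hu0)
        exact (((hq3.mul hxq).add (hu0.div_const 2)).add tendsto_const_nhds).add
          (((htt.pow 2).mul hu0).const_mul a₃)
      refine hE2.congr' ?_
      filter_upwards [hne] with t ht
      simp only [hFdef, hXdef]
      field_simp
      ring
    have heq := tendsto_nhds_unique hFG2 hFG
    have hb2 : b₀^2 ≠ 0 := by positivity
    norm_num at heq
    field_simp at heq ⊢
    linarith
  · ------------------------------------------------------------------
    -- v part : f = B₁·y·t², L'Hôpital against t⁴
    ------------------------------------------------------------------
    set f : ℝ → ℝ := fun t => B₁ t * (t^2 * v t) * t^2 with hfdef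
    set f' : ℝ → ℝ := fun t => B₁ t * (t^2 * v t) *
      ((-2/A₁ t + 2*(x₁*t + t^3*u t))*t^2 + 2*t) with hf'def
    have hfd : ∀ᶠ t in L, HasDerivAt f (f' t) t := by
      filter_upwards [hIoo, hAne, hBne] with t htI hAt hBt
      have hBd : HasDerivAt B₁ (deriv B₁ t) t := (hB.differentiable (by simp) t).hasDerivAt
      have h1 := (hBd.mul (hy t htI)).mul (hasDerivAt_pow 2 t)
      refine h1.congr_deriv ?_
      simp only [hf'def, Pi.mul_apply]
      field_simp
      ring
    have hf0 : Tendsto f L (𝓝 0) := by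
      have h2 : Tendsto (fun t => B₁ t * v t * t^4) L (𝓝 (b₀ * v 0 * 0)) :=
        (hB0.mul hv0).mul hg0
      rw [mul_zero] at h2
      exact h2.congr fun t => by simp only [hfdef]; ring
    have hdivv : Tendsto (fun t => f' t / (4*t^3)) L
        (𝓝 (b₀ * v 0 * (2 + 2*0 - 2*2)/4)) := by
      have hE : Tendsto (fun t => B₁ t * v t *
          (2 + 2*((x₁*t + t^3*u t)*t) - 2*(t/A₁ t))/4) L
          (𝓝 (b₀ * v 0 * (2 + 2*0 - 2*2)/4)) := by
        have h1 : Tendsto (fun t => (x₁*t + t^3*u t)*t) L (𝓝 0) := by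
          have := hxlim.mul htt
          rwa [zero_mul] at this
        exact ((hB0.mul hv0).mul ((tendsto_const_nhds.add (h1.const_mul 2)).sub
          (htA.const_mul 2))).div_const 4
      refine hE.congr' ?_
      filter_upwards [hne, hAne] with t ht hAt
      simp only [hf'def]
      field_simp
      ring
    have hFG := HasDerivAt.lhopital_zero_nhdsGT hfd
      (Filter.Eventually.of_forall fun t => hg4 t) hg'ne hf0 hg0 hdivv
    have hFG2 : Tendsto (fun t => f t / t^4) L (𝓝 (b₀ * v 0)) := by
      have h2 : Tendsto (fun t => B₁ t * v t) L (𝓝 (b₀ * v 0)) := hB0.mul hv0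
      refine h2.congr' ?_
      filter_upwards [hne] with t ht
      simp only [hfdef]
      field_simp
    have heq := tendsto_nhds_unique hFG2 hFG
    have : b₀ * v 0 = 0 := by linarith
    rcases mul_eq_zero.mp this with h | h
    · exact absurd h (ne_of_gt hb₀)
    · exact h
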